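/- Let Ω ⊆ ℝ^n be open and E ⊆ ℝ^n measurable with Per_K(E,Ω) < ∞. Then E is K-outward minimizing in Ω if and only if for every measurable G ⊆ ℝ^n with G∖E compactly contained in Ω one has Per_K(E∩G,Ω) ≤ Per_K(G,Ω). -/

import Mathlib

open MeasureTheory Set Filter Metric Topology
open scoped ENNReal Pointwise

noncomputable section

abbrev Euc (n : ℕ) := EuclideanSpace ℝ (Fin n)

/-- Admissible kernel: measurable, nonnegative and even away from the origin,
with `∫ min(1,|x|) K(x) dx < ∞`. -/
def KernelOK {n : ℕ} (K : Euc n → ℝ) : Prop :=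
  Measurable K ∧ (∀ x : Euc n, x ≠ 0 → 0 ≤ K x) ∧ (∀ x : Euc n, x ≠ 0 → K (-x) = K x) ∧
    (∫⁻ x : Euc n, ENNReal.ofReal (min 1 ‖x‖ * K x)) < ⊤

/-- The `K`-perimeter of `E` in `Ω`. -/
def perK {n : ℕ} (K : Euc n → ℝ) (E Ω : Set (Euc n)) : ℝ≥0∞ :=
  (∫⁻ x in E, ∫⁻ y in Ω \ E, ENNReal.ofReal (K (x - y))) +
  (∫⁻ x in E ∩ Ω, ∫⁻ y in (Ω ∪ E)ᶜ, ENNReal.ofReal (K (x - y)))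

/-- The (total) `K`-perimeter of `E`. -/
def perKtot {n : ℕ} (K : Euc n → ℝ) (E : Set (Euc n)) : ℝ≥0∞ :=
  ∫⁻ x in E, ∫⁻ y in Eᶜ, ENNReal.ofReal (K (x - y))

/-- `A` is compactly contained in `Ω`. -/
def CptIn {n : ℕ} (A Ω : Set (Euc n)) : Prop :=
  IsCompact (closure A) ∧ closure A ⊆ Ω

/-- `E` is `K`-outward minimizing in `Ω`. -/
def OutMin {n : ℕ} (K : Euc n → ℝ) (E Ω : Set (Euc n)) : Prop :=
  ∀ F : Set (Euc n), MeasurableSet F → E ⊆ F → CptIn (F \ E) Ω →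
    perK K E Ω ≤ perK K F Ω

/-- `E` is strongly `K`-outward minimizing in `Ω` with constant `δ`. -/
def StrongOutMin {n : ℕ} (K : Euc n → ℝ) (δ : ℝ) (E Ω : Set (Euc n)) : Prop :=
  ∀ F : Set (Euc n), MeasurableSet F → E ⊆ F → CptIn (F \ E) Ω →
    perK K E Ω + ENNReal.ofReal δ * volume (F \ E) ≤ perK K F Ω

end
noncomputable section
open MeasureTheory Set Filter Metric Topology
open scoped ENNReal Pointwise

/-- The truncated `K`-curvature of `G` at `x`, with truncation parameter `ε`:
`∫_{ℝⁿ∖B(x,ε)} (χ_{Gᶜ}(y) − χ_G(y)) K(x−y) dy`. -/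
def truncCurv {n : ℕ} (K : Euc n → ℝ) (G : Set (Euc n)) (x : Euc n) (ε : ℝ) : ℝ :=
  ∫ y in (Metric.ball x ε)ᶜ,
    ((Gᶜ).indicator (fun _ => (1:ℝ)) y - G.indicator (fun _ => (1:ℝ)) y) * K (x - y)

/-- `G` has compact boundary of class `C^{1,1}`: the boundary is compact, and `G` is the
sublevel set of a `C^1` function with Lipschitz gradient which is nondegenerate on the
boundary. -/
def HasCptC11Boundary {n : ℕ} (G : Set (Euc n)) : Prop :=
  IsCompact (frontier G) ∧
  ∃ φ : Euc n → ℝ, ContDiff ℝ 1 φ ∧ (∃ L : NNReal, LipschitzWith L (fderiv ℝ φ)) ∧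
    G = {x | φ x ≤ 0} ∧ frontier G = {x | φ x = 0} ∧
    ∀ x ∈ frontier G, fderiv ℝ φ x ≠ 0

/-- `H^K_A(x) ≥ c` in the viscosity sense: every set `G` with compact `C^{1,1}` boundary
with `G ⊆ A` and `x ∈ ∂G` has `K`-curvature at least `c` at `x` (the curvature being the
limit of the truncated curvatures). -/
def ViscCurvGE {n : ℕ} (K : Euc n → ℝ) (A : Set (Euc n)) (x : Euc n) (c : ℝ) : Prop :=
  ∀ G : Set (Euc n), HasCptC11Boundary G → G ⊆ A → x ∈ frontier G →
    ∀ L : ℝ, Tendsto (truncCurv K G x) (𝓝[>] (0:ℝ)) (𝓝 L) → c ≤ L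

/-- Signed distance function from `E` (positive inside). -/
def sgnDist {n : ℕ} (E : Set (Euc n)) (x : Euc n) : ℝ :=
  Metric.infDist x Eᶜ - Metric.infDist x E

/-- The Almgren–Taylor–Wang energy `Per_K(G) − (1/h)∫_G d_E`. -/
def atwEnergy {n : ℕ} (K : Euc n → ℝ) (E : Set (Euc n)) (h : ℝ) (G : Set (Euc n)) : ℝ :=
  (perKtot K G).toReal - (1/h) * ∫ x in G, sgnDist E x

/-- `T` is an ATW minimizer for `E` at step `h`: it minimizes the ATW energy among all
measurable sets (competitors with infinite energy being irrelevant). -/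
def ATWMin {n : ℕ} (K : Euc n → ℝ) (E : Set (Euc n)) (h : ℝ) (T : Set (Euc n)) : Prop :=
  MeasurableSet T ∧ perKtot K T < ⊤ ∧ IntegrableOn (sgnDist E) T ∧
  ∀ G : Set (Euc n), MeasurableSet G → perKtot K G < ⊤ → IntegrableOn (sgnDist E) G →
    atwEnergy K E h T ≤ atwEnergy K E h G

/-- The set of Lebesgue density-one points of `T`. -/
def densityPts {n : ℕ} (T : Set (Euc n)) : Set (Euc n) :=
  {x | Tendsto (fun ρ : ℝ =>
      volume (T ∩ Metric.closedBall x ρ) / volume (Metric.closedBall x ρ))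
    (𝓝[>] (0:ℝ)) (𝓝 1)}

/-- The nonlocal functional `J_K(v) = ½∬ |v(x)−v(y)| K(x−y) dx dy`. -/
def JK {n : ℕ} (K : Euc n → ℝ) (v : Euc n → ℝ) : ℝ≥0∞ :=
  (1/2 : ℝ≥0∞) * ∫⁻ x : Euc n, ∫⁻ y : Euc n,
    ENNReal.ofReal |v x - v y| * ENNReal.ofReal (K (x - y))

end

open MeasureTheory Set Filter Metric Topology
open scoped ENNReal

section AuxSubmod

variable {n : ℕ}

open Classical in
/-- Auxiliary pair function. -/
noncomputable def pairFun (K : Euc n → ℝ) (W : Set (Euc n × Euc n)) (A : Set (Euc n))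
    (p : Euc n × Euc n) : ℝ≥0∞ :=
  if p.1 ∈ A ∧ p.2 ∉ A ∧ p ∈ W then ENNReal.ofReal (K (p.1 - p.2)) else 0

lemma pairFun_measurable {K : Euc n → ℝ} (hm : Measurable K)
    {W : Set (Euc n × Euc n)} (hW : MeasurableSet W) {A : Set (Euc n)}
    (hA : MeasurableSet A) : Measurable (pairFun K W A) := by
  have hs : MeasurableSet {p : Euc n × Euc n | p.1 ∈ A ∧ p.2 ∉ A ∧ p ∈ W} := by
    have : {p : Euc n × Euc n | p.1 ∈ A ∧ p.2 ∉ A ∧ p ∈ W} = (A ×ˢ Aᶜ) ∩ W := by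
      ext p; simp [Set.mem_prod, and_assoc]
    rw [this]
    exact ((hA.prod hA.compl).inter hW)
  have heq : pairFun K W A = Set.indicator {p : Euc n × Euc n | p.1 ∈ A ∧ p.2 ∉ A ∧ p ∈ W}
      (fun p => ENNReal.ofReal (K (p.1 - p.2))) := by
    funext p
    by_cases h : p.1 ∈ A ∧ p.2 ∉ A ∧ p ∈ W <;>
      simp [pairFun, Set.indicator_apply, Set.mem_setOf_eq, h]
  rw [heq]
  exact (ENNReal.measurable_ofReal.comp (hm.comp (measurable_fst.sub measurable_snd))).indicator hs

/-- Auxiliary functional. -/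
noncomputable def Phi (K : Euc n → ℝ) (W : Set (Euc n × Euc n)) (A : Set (Euc n)) : ℝ≥0∞ :=
  ∫⁻ x, ∫⁻ y, pairFun K W A (x, y)

lemma pairFun_submod (K : Euc n → ℝ) (W : Set (Euc n × Euc n)) (A B : Set (Euc n))
    (p : Euc n × Euc n) :
    pairFun K W (A ∪ B) p + pairFun K W (A ∩ B) p
      ≤ pairFun K W A p + pairFun K W B p := by
  unfold pairFun
  by_cases h1 : p.1 ∈ A <;> by_cases h2 : p.1 ∈ B <;>
    by_cases h3 : p.2 ∈ A <;> by_cases h4 : p.2 ∈ B <;>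
    by_cases h5 : p ∈ W <;>
    simp [h1, h2, h3, h4, h5, Set.mem_union, Set.mem_inter_iff, le_add_right, le_refl]

lemma phi_submod {K : Euc n → ℝ} (hm : Measurable K)
    {W : Set (Euc n × Euc n)} (hW : MeasurableSet W) {A B : Set (Euc n)}
    (hA : MeasurableSet A) (hB : MeasurableSet B) :
    Phi K W (A ∪ B) + Phi K W (A ∩ B) ≤ Phi K W A + Phi K W B := by
  have mIn : ∀ C : Set (Euc n), MeasurableSet C →
      Measurable fun x => ∫⁻ y, pairFun K W C (x, y) := fun C hC =>
    (pairFun_measurable hm hW hC).lintegral_prod_right'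
  unfold Phi
  rw [← lintegral_add_left (mIn _ (hA.union hB)), ← lintegral_add_left (mIn _ hA)]
  refine lintegral_mono fun x => ?_
  have m1 : Measurable fun y => pairFun K W (A ∪ B) (x, y) :=
    (pairFun_measurable hm hW (hA.union hB)).comp measurable_prodMk_left
  have m2 : Measurable fun y => pairFun K W A (x, y) :=
    (pairFun_measurable hm hW hA).comp measurable_prodMk_left
  calc (∫⁻ y, pairFun K W (A ∪ B) (x, y)) + ∫⁻ y, pairFun K W (A ∩ B) (x, y)
      = ∫⁻ y, (pairFun K W (A ∪ B) (x, y) + pairFun K W (A ∩ B) (x, y)) :=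
        (lintegral_add_left m1 _).symm
    _ ≤ ∫⁻ y, (pairFun K W A (x, y) + pairFun K W B (x, y)) :=
        lintegral_mono fun y => pairFun_submod K W A B (x, y)
    _ = (∫⁻ y, pairFun K W A (x, y)) + ∫⁻ y, pairFun K W B (x, y) :=
        lintegral_add_left m2 _

lemma perK_eq_phi {K : Euc n → ℝ} {Ω A : Set (Euc n)}
    (hΩ : MeasurableSet Ω) (hA : MeasurableSet A) :
    perK K A Ω = Phi K (Set.univ ×ˢ Ω) A + Phi K (Ω ×ˢ Ωᶜ) A := by
  unfold perK Phi
  congr 1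
  · rw [← lintegral_indicator hA]
    refine lintegral_congr fun x => ?_
    by_cases hx : x ∈ A
    · rw [Set.indicator_of_mem hx, ← lintegral_indicator (hΩ.diff hA)]
      refine lintegral_congr fun y => ?_
      by_cases hy1 : y ∈ Ω <;> by_cases hy2 : y ∈ A <;>
        simp [pairFun, Set.indicator_apply, Set.mem_diff, hx, hy1, hy2]
    · rw [Set.indicator_of_notMem hx]
      simp [pairFun, hx]
  · rw [← lintegral_indicator (hA.inter hΩ)]
    refine lintegral_congr fun x => ?_
    by_cases hx : x ∈ A ∩ Ω
    · rw [Set.indicator_of_mem hx, ← lintegral_indicator (hΩ.union hA).compl]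
      refine lintegral_congr fun y => ?_
      by_cases hy1 : y ∈ Ω <;> by_cases hy2 : y ∈ A <;>
        simp [pairFun, Set.indicator_apply, Set.mem_union, hx.1, hx.2, hy1, hy2]
    · rw [Set.indicator_of_notMem hx]
      rw [Set.mem_inter_iff, not_and_or] at hx
      rcases hx with hx | hx <;> simp [pairFun, hx]

lemma perK_submod {K : Euc n → ℝ} (hm : Measurable K) {Ω A B : Set (Euc n)}
    (hΩ : MeasurableSet Ω) (hA : MeasurableSet A) (hB : MeasurableSet B) :
    perK K (A ∪ B) Ω + perK K (A ∩ B) Ω ≤ perK K A Ω + perK K B Ω := by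
  rw [perK_eq_phi hΩ (hA.union hB), perK_eq_phi hΩ (hA.inter hB),
    perK_eq_phi hΩ hA, perK_eq_phi hΩ hB]
  have h1 := phi_submod hm (MeasurableSet.univ.prod hΩ) hA hB
  have h2 := phi_submod hm (hΩ.prod hΩ.compl) hA hB
  calc Phi K (Set.univ ×ˢ Ω) (A ∪ B) + Phi K (Ω ×ˢ Ωᶜ) (A ∪ B) +
        (Phi K (Set.univ ×ˢ Ω) (A ∩ B) + Phi K (Ω ×ˢ Ωᶜ) (A ∩ B))
      = (Phi K (Set.univ ×ˢ Ω) (A ∪ B) + Phi K (Set.univ ×ˢ Ω) (A ∩ B)) +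
        (Phi K (Ω ×ˢ Ωᶜ) (A ∪ B) + Phi K (Ω ×ˢ Ωᶜ) (A ∩ B)) := by
        rw [add_add_add_comm]
    _ ≤ (Phi K (Set.univ ×ˢ Ω) A + Phi K (Set.univ ×ˢ Ω) B) +
        (Phi K (Ω ×ˢ Ωᶜ) A + Phi K (Ω ×ˢ Ωᶜ) B) := add_le_add h1 h2
    _ = Phi K (Set.univ ×ˢ Ω) A + Phi K (Ω ×ˢ Ωᶜ) A +
        (Phi K (Set.univ ×ˢ Ω) B + Phi K (Ω ×ˢ Ωᶜ) B) := by rw [add_add_add_comm]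

end AuxSubmod

/-- characterization of `K`-outward minimality via intersections. -/
theorem outMin_iff_inter {n : ℕ} (K : Euc n → ℝ) (hK : KernelOK K)
    (Ω E : Set (Euc n)) (hΩ : IsOpen Ω) (hE : MeasurableSet E)
    (hfin : perK K E Ω < ⊤) :
    OutMin K E Ω ↔
      ∀ G : Set (Euc n), MeasurableSet G → CptIn (G \ E) Ω →
        perK K (E ∩ G) Ω ≤ perK K G Ω := by
  constructor
  · intro hmin G hG hcpt
    have hsub := perK_submod hK.1 hΩ.measurableSet hE hG
    have hle : perK K E Ω ≤ perK K (E ∪ G) Ω := by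
      refine hmin (E ∪ G) (hE.union hG) Set.subset_union_left ?_
      rwa [Set.union_diff_left]
    have : perK K E Ω + perK K (E ∩ G) Ω ≤ perK K E Ω + perK K G Ω :=
      le_trans (add_le_add_left hle _) hsub
    exact (ENNReal.add_le_add_iff_left hfin.ne).mp this
  · intro h F hF hEF hcpt
    have := h F hF hcpt
    rwa [Set.inter_eq_self_of_subset_left hEF] at this
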